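/- Let (Ω, ℱ, P) be a probability space, let X : Ω → 𝒳 be measurable into a measurable space 𝒳, let B : Ω → {0,1} be measurable, and let Y, W : Ω → ℝ be bounded measurable. Assume: (i) consistency: B·Y = B·W almost surely; and (ii) exchangeability: B and W are conditionally independent given σ(X). Then E[B·Y | σ(X)] = E[B | σ(X)]·E[W | σ(X)] almost surely. -/

import Mathlib

open MeasureTheory ProbabilityTheory Set

/-- Auxiliary: if a probability measure `ν` satisfies the product formula on the
π-system of rational `Iic` sets for a set `s` and a bounded measurable `W`, then the
set integral of `W` over `s` factors. -/
lemma aux_factor {Ω : Type*} [MeasurableSpace Ω] (ν : Measure Ω) [IsProbabilityMeasure ν]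
    {s : Set Ω} (hs : MeasurableSet s) {W : Ω → ℝ} (hW : Measurable W)
    {M : ℝ} (hWb : ∀ ω, |W ω| ≤ M)
    (h : ∀ q : ℚ, ν (s ∩ W ⁻¹' Iic (q : ℝ)) = ν s * ν (W ⁻¹' Iic (q : ℝ))) :
    ∫ y in s, W y ∂ν = (ν s).toReal * ∫ y, W y ∂ν := by
  have hmap : IsProbabilityMeasure (ν.map W) := Measure.isProbabilityMeasure_map hW.aemeasurable
  have hmeas_eq : (ν.restrict s).map W = ν s • (ν.map W) := by
    refine ext_of_generate_finite (⋃ a : ℚ, {Iic (a : ℝ)})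
      (BorelSpace.measurable_eq.trans Real.borel_eq_generateFrom_Iic_rat) ?_ ?_ ?_
    · rintro t1 ht1 t2 ht2 -
      simp only [mem_iUnion, mem_singleton_iff] at ht1 ht2 ⊢
      obtain ⟨q1, rfl⟩ := ht1
      obtain ⟨q2, rfl⟩ := ht2
      exact ⟨min q1 q2, by rw [Iic_inter_Iic, Rat.cast_min]⟩
    · rintro t ht
      simp only [mem_iUnion, mem_singleton_iff] at ht
      obtain ⟨q, rfl⟩ := ht
      rw [Measure.map_apply hW measurableSet_Iic,
        Measure.restrict_apply (hW measurableSet_Iic), Set.inter_comm, h q,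
        Measure.smul_apply, smul_eq_mul, Measure.map_apply hW measurableSet_Iic]
    · simp [Measure.map_apply hW MeasurableSet.univ, Measure.smul_apply,
        Measure.restrict_apply_univ, measure_univ]
  have h1 : ∫ y in s, W y ∂ν = ∫ x, x ∂((ν.restrict s).map W) :=
    (integral_map hW.aemeasurable aestronglyMeasurable_id).symm
  have h2 : ∫ x, x ∂(ν.map W) = ∫ y, W y ∂ν :=
    integral_map hW.aemeasurable aestronglyMeasurable_id
  rw [h1, hmeas_eq, integral_smul_measure, h2, smul_eq_mul]

/-- Identification kernel underlying Proposition 1 (prop:id): with consistency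
`B·Y = B·W` a.s. and exchangeability (conditional independence of `B` and `W` given
`σ(X)`), the observed-data regression factors:
`E[B·Y | σ(X)] = E[B | σ(X)] · E[W | σ(X)]` almost surely. -/
theorem stmt_19 {Ω 𝒳 : Type*} [MeasurableSpace Ω] [StandardBorelSpace Ω] [Nonempty Ω]
    [MeasurableSpace 𝒳]
    (P : Measure Ω) [IsProbabilityMeasure P]
    (X : Ω → 𝒳) (hX : Measurable X)
    (B : Ω → ℝ) (hB_meas : Measurable B) (hB01 : ∀ ω, B ω = 0 ∨ B ω = 1)
    (Y W : Ω → ℝ)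
    (hY_meas : Measurable Y) (hY_bdd : ∃ M : ℝ, ∀ ω, |Y ω| ≤ M)
    (hW_meas : Measurable W) (hW_bdd : ∃ M : ℝ, ∀ ω, |W ω| ≤ M)
    (hcons : ∀ᵐ ω ∂P, B ω * Y ω = B ω * W ω)
    (hexch : CondIndepFun (MeasurableSpace.comap X inferInstance) hX.comap_le B W P) :
    P[fun ω => B ω * Y ω | MeasurableSpace.comap X inferInstance]
      =ᵐ[P] fun ω =>
        (P[B | MeasurableSpace.comap X inferInstance]) ω
          * (P[W | MeasurableSpace.comap X inferInstance]) ω := by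
  have hm' : MeasurableSpace.comap X inferInstance ≤ ‹MeasurableSpace Ω› := hX.comap_le
  obtain ⟨MW, hMW⟩ := hW_bdd
  obtain ⟨MY, hMY⟩ := hY_bdd
  -- integrability of everything in sight
  have hbdd_int : ∀ (f : Ω → ℝ) (C : ℝ), Measurable f → (∀ ω, |f ω| ≤ C) → Integrable f P := by
    intro f C hf hC
    exact ⟨hf.aestronglyMeasurable,
      HasFiniteIntegral.of_bounded (C := C) (Filter.Eventually.of_forall fun ω => by
        simpa [Real.norm_eq_abs] using hC ω)⟩
  have hB1 : ∀ ω, |B ω| ≤ 1 := by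
    intro ω; rcases hB01 ω with h | h <;> simp [h]
  have hInt_W : Integrable W P := hbdd_int W MW hW_meas hMW
  have hInt_B : Integrable B P := hbdd_int B 1 hB_meas hB1
  have hInt_BW : Integrable (fun ω => B ω * W ω) P := by
    refine hbdd_int _ (|MW|) (hB_meas.mul hW_meas) fun ω => ?_
    calc |B ω * W ω| = |B ω| * |W ω| := abs_mul _ _
      _ ≤ 1 * |MW| := mul_le_mul (hB1 ω) ((hMW ω).trans (le_abs_self _))
          (abs_nonneg _) zero_le_one
      _ = |MW| := one_mul _
  have hInt_BY : Integrable (fun ω => B ω * Y ω) P := by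
    refine hbdd_int _ (|MY|) (hB_meas.mul hY_meas) fun ω => ?_
    calc |B ω * Y ω| = |B ω| * |Y ω| := abs_mul _ _
      _ ≤ 1 * |MY| := mul_le_mul (hB1 ω) ((hMY ω).trans (le_abs_self _))
          (abs_nonneg _) zero_le_one
      _ = |MY| := one_mul _
  -- step 1: consistency lets us replace Y with W
  have hstep1 : P[fun ω => B ω * Y ω | MeasurableSpace.comap X inferInstance]
      =ᵐ[P] P[fun ω => B ω * W ω | MeasurableSpace.comap X inferInstance] :=
    condExp_congr_ae hcons
  -- conditional expectations as kernel integrals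
  set κ := condExpKernel P (MeasurableSpace.comap X inferInstance) with hκ_def
  have hBW_ae : P[fun ω => B ω * W ω | MeasurableSpace.comap X inferInstance]
      =ᵐ[P] fun ω => ∫ y, B y * W y ∂κ ω :=
    condExp_ae_eq_integral_condExpKernel hm' hInt_BW
  have hB_ae : P[B | MeasurableSpace.comap X inferInstance]
      =ᵐ[P] fun ω => ∫ y, B y ∂κ ω :=
    condExp_ae_eq_integral_condExpKernel hm' hInt_B
  have hW_ae : P[W | MeasurableSpace.comap X inferInstance]
      =ᵐ[P] fun ω => ∫ y, W y ∂κ ω :=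
    condExp_ae_eq_integral_condExpKernel hm' hInt_W
  -- the set on which B = 1
  set s : Set Ω := B ⁻¹' {1} with hs_def
  have hs : MeasurableSet s := hB_meas (measurableSet_singleton 1)
  have hBind : ∀ y, B y * W y = s.indicator W y := by
    intro y
    rcases hB01 y with h | h
    · have : y ∉ s := by simp [hs_def, h]
      simp [Set.indicator_of_notMem this, h]
    · have : y ∈ s := by simp [hs_def, h]
      simp [Set.indicator_of_mem this, h]
  have hBind1 : ∀ y, B y = s.indicator (fun _ => (1 : ℝ)) y := by
    intro y
    rcases hB01 y with h | h
    · have : y ∉ s := by simp [hs_def, h]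
      simp [Set.indicator_of_notMem this, h]
    · have : y ∈ s := by simp [hs_def, h]
      simp [Set.indicator_of_mem this, h]
  -- from conditional independence: product formula for each rational level set, a.e.
  have hkey : ∀ᵐ ω ∂P, ∀ q : ℚ,
      κ ω (s ∩ W ⁻¹' Iic (q : ℝ)) = κ ω s * κ ω (W ⁻¹' Iic (q : ℝ)) := by
    have h_trim : ∀ᵐ ω ∂(P.trim hm'), ∀ q : ℚ,
        κ ω (s ∩ W ⁻¹' Iic (q : ℝ)) = κ ω s * κ ω (W ⁻¹' Iic (q : ℝ)) := by
      rw [MeasureTheory.ae_all_iff]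
      intro q
      exact Kernel.IndepFun.measure_inter_preimage_eq_mul hexch {1} (Iic (q : ℝ))
        (measurableSet_singleton 1) measurableSet_Iic
    exact ae_of_ae_trim hm' h_trim
  -- combine everything
  refine hstep1.trans (hBW_ae.trans ?_)
  filter_upwards [hkey, hB_ae, hW_ae] with ω hω hBω hWω
  have hfact : ∫ y in s, W y ∂(κ ω) = ((κ ω) s).toReal * ∫ y, W y ∂(κ ω) :=
    aux_factor (κ ω) hs hW_meas hMW hω
  have hint_s : ∫ y, B y * W y ∂(κ ω) = ∫ y in s, W y ∂(κ ω) := by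
    rw [show (fun y => B y * W y) = s.indicator W from funext hBind]
    exact integral_indicator hs
  have hintB : ∫ y, B y ∂(κ ω) = ((κ ω) s).toReal := by
    rw [show B = s.indicator (fun _ => (1 : ℝ)) from funext hBind1]
    simp [integral_indicator hs, Measure.real]
  rw [hBω, hWω, hint_s, hfact, hintB]
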